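/- arXiv:1007.1269 — 3 statements merged into one kernel-verified Lean document; each statement's English description precedes it below -/
import Mathlib

section
/- Let G be a finite simple graph, let 𝒫 = (X_1,…,X_d) be a path decomposition of G, and let 𝒢 be the derived graph of G and 𝒫. For every vertex u of G, the set U = {v_i(H) ∈ V(𝒢) : u ∈ V(H)} induces a connected subgraph of 𝒢. -/
open SimpleGraph

/-- A path decomposition of `G` with bags `X 0, …, X (d-1)`. -/
def IsPathDecomp {V : Type*} (G : SimpleGraph V) {d : ℕ} (X : Fin d → Finset V) : Prop :=
  (∀ v : V, ∃ i, v ∈ X i) ∧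
  (∀ u v : V, G.Adj u v → ∃ i, u ∈ X i ∧ v ∈ X i) ∧
  (∀ i j k : Fin d, i ≤ j → j ≤ k → ∀ v : V, v ∈ X i → v ∈ X k → v ∈ X j)

/-- Vertices of the derived graph: pairs `(i, H)` where `H` is a connected component of
the subgraph of `G` induced by the bag `X i`. -/
def DVert {V : Type*} (G : SimpleGraph V) {d : ℕ} (X : Fin d → Finset V) : Type _ :=
  Σ i : Fin d, (G.induce (X i : Set V)).ConnectedComponent

/-- The set `V(H) ⊆ V(G)` of vertices of the component represented by a derived vertex. -/
def dsupp {V : Type*} (G : SimpleGraph V) {d : ℕ} (X : Fin d → Finset V)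
    (x : DVert G X) : Set V :=
  {v | ∃ h : v ∈ (X x.1 : Set V),
    (G.induce (X x.1 : Set V)).connectedComponentMk ⟨v, h⟩ = x.2}

/-- The derived graph `𝒢` of `G` and the path decomposition `X`: vertices in consecutive
layers are adjacent exactly when their components share a vertex of `G`.
(Layers are numbered `1, …, d`; a vertex `x` lies in layer `x.1 + 1`.) -/
def derived {V : Type*} (G : SimpleGraph V) {d : ℕ} (X : Fin d → Finset V) :
    SimpleGraph (DVert G X) where
  Adj a b := ((a.1 : ℕ) + 1 = (b.1 : ℕ) ∨ (b.1 : ℕ) + 1 = (a.1 : ℕ)) ∧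
    (dsupp G X a ∩ dsupp G X b).Nonempty
  symm := by
    constructor
    rintro a b ⟨h1, h2⟩
    exact ⟨h1.symm, by rwa [Set.inter_comm]⟩
  loopless := by
    constructor
    rintro a ⟨h1, -⟩
    rcases h1 with h | h <;> omega

/-- The layer `V_i` of the derived graph (`1`-based: `V_i = {x | x.1 + 1 = i}`). -/
def layer {V : Type*} (G : SimpleGraph V) {d : ℕ} (X : Fin d → Finset V) (i : ℕ) :
    Set (DVert G X) :=
  {x | (x.1 : ℕ) + 1 = i}

/-- The border `δ(C)`: vertices of `C` with a neighbor outside `C`. -/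
def border {V : Type*} (G : SimpleGraph V) {d : ℕ} (X : Fin d → Finset V)
    (C : Set (DVert G X)) : Set (DVert G X) :=
  {x | x ∈ C ∧ ∃ y, (derived G X).Adj x y ∧ y ∉ C}

/-- The neighborhood `N_𝒢(S)`: vertices outside `S` adjacent to some vertex of `S`. -/
def nbhd {V : Type*} (G : SimpleGraph V) {d : ℕ} (X : Fin d → Finset V)
    (S : Set (DVert G X)) : Set (DVert G X) :=
  {u | u ∉ S ∧ ∃ x ∈ S, (derived G X).Adj u x}

/-- The weight of a set of derived vertices: `ω(S) = Σ_{x∈S} |V(H_x)|`. -/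
noncomputable def wsum {V : Type*} (G : SimpleGraph V) {d : ℕ} (X : Fin d → Finset V)
    (S : Set (DVert G X)) : ℕ :=
  ∑ᶠ x ∈ S, (dsupp G X x).ncard

/-- The right extremity `r(S)` (`1`-based); `r(∅) = 0` by convention. -/
noncomputable def rIdx {V : Type*} (G : SimpleGraph V) {d : ℕ} (X : Fin d → Finset V)
    (S : Set (DVert G X)) : ℕ :=
  sSup {n | ∃ x ∈ S, (x.1 : ℕ) + 1 = n}

/-- The left extremity `l(S)` (`1`-based); `l(∅) = d + 1` by convention. -/
noncomputable def lIdx {V : Type*} (G : SimpleGraph V) {d : ℕ} (X : Fin d → Finset V)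
    (S : Set (DVert G X)) : ℕ :=
  sInf ({n | ∃ x ∈ S, (x.1 : ℕ) + 1 = n} ∪ {d + 1})

/-- `(BL, BR)` is a border partition of `C`: disjoint sets whose union is `δ(C)`,
with `BL ⊆ V_1 ∪ … ∪ V_i` and `BR ⊆ V_{i+1} ∪ … ∪ V_d` for some `0 ≤ i ≤ d`. -/
def IsBorderPartition {V : Type*} (G : SimpleGraph V) {d : ℕ} (X : Fin d → Finset V)
    (C BL BR : Set (DVert G X)) : Prop :=
  Disjoint BL BR ∧ border G X C = BL ∪ BR ∧
    ∃ i : ℕ, i ≤ d ∧ (∀ x ∈ BL, (x.1 : ℕ) + 1 ≤ i) ∧ (∀ x ∈ BR, i + 1 ≤ (x.1 : ℕ) + 1)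

/-- `u` and `w` are connected by a progressive path of `𝒢`
(a path meeting each layer at most once). -/
def ProgConn {V : Type*} (G : SimpleGraph V) {d : ℕ} (X : Fin d → Finset V)
    (u w : DVert G X) : Prop :=
  ∃ p : (derived G X).Walk u w, ∀ a ∈ p.support, ∀ b ∈ p.support, a.1 = b.1 → a = b

/-- The vertex set of the left branch `branch_L(C, i)`: `BL` together with all
`v ∈ V_k \ C`, `i ≤ k < r(BL)`, joined by a progressive path to some `x ∈ V_j ∩ BL`, `k < j`. -/
def branchL {V : Type*} (G : SimpleGraph V) {d : ℕ} (X : Fin d → Finset V)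
    (C BL : Set (DVert G X)) (i : ℕ) : Set (DVert G X) :=
  BL ∪ {v | v ∉ C ∧ i ≤ (v.1 : ℕ) + 1 ∧ (v.1 : ℕ) + 1 < rIdx G X BL ∧
    ∃ x ∈ BL, (v.1 : ℕ) < (x.1 : ℕ) ∧ ProgConn G X v x}

/-- The vertex set of the right branch `branch_R(C, i)`: `BR` together with all
`v ∈ V_k \ C`, `l(BR) < k ≤ i`, joined by a progressive path to some `x ∈ V_j ∩ BR`, `j < k`. -/
def branchR {V : Type*} (G : SimpleGraph V) {d : ℕ} (X : Fin d → Finset V)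
    (C BR : Set (DVert G X)) (i : ℕ) : Set (DVert G X) :=
  BR ∪ {v | v ∉ C ∧ lIdx G X BR < (v.1 : ℕ) + 1 ∧ (v.1 : ℕ) + 1 ≤ i ∧
    ∃ x ∈ BR, (x.1 : ℕ) < (v.1 : ℕ) ∧ ProgConn G X v x}

/-- The external vertices of a branch with vertex set `S` (relative to `C`):
vertices of `S` with a neighbor outside `C ∪ S`. -/
def extSet {V : Type*} (G : SimpleGraph V) {d : ℕ} (X : Fin d → Finset V)
    (C S : Set (DVert G X)) : Set (DVert G X) :=
  {v | v ∈ S ∧ ∃ u, (derived G X).Adj v u ∧ u ∉ C ∪ S}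

/-- The left branch `branch_L(C, i)` is proper: no external vertices in layers `> i`. -/
def ProperL {V : Type*} (G : SimpleGraph V) {d : ℕ} (X : Fin d → Finset V)
    (C BL : Set (DVert G X)) (i : ℕ) : Prop :=
  ∀ v ∈ extSet G X C (branchL G X C BL i), (v.1 : ℕ) + 1 ≤ i

/-- The right branch `branch_R(C, i)` is proper: no external vertices in layers `< i`. -/
def ProperR {V : Type*} (G : SimpleGraph V) {d : ℕ} (X : Fin d → Finset V)
    (C BR : Set (DVert G X)) (i : ℕ) : Prop :=
  ∀ v ∈ extSet G X C (branchR G X C BR i), i ≤ (v.1 : ℕ) + 1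

/-- For every vertex `u` of `G`, the set `U = {v_i(H) ∈ V(𝒢) : u ∈ V(H)}` induces a
connected subgraph of the derived graph `𝒢`. -/
theorem derived_induce_connected {V : Type*} [Fintype V] (G : SimpleGraph V)
    {d : ℕ} (X : Fin d → Finset V) (hX : IsPathDecomp G X) (u : V) :
    ((derived G X).induce {x : DVert G X | u ∈ dsupp G X x}).Connected := by
  obtain ⟨hcov, -, hinter⟩ := hX
  set S : Set (DVert G X) := {x : DVert G X | u ∈ dsupp G X x} with hS
  have huniq : ∀ a b : DVert G X, a ∈ S → b ∈ S → a.1 = b.1 → a = b := by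
    rintro ⟨i, ca⟩ ⟨j, cb⟩ ⟨ha, ha2⟩ ⟨hb, hb2⟩ h
    dsimp at h
    subst h
    exact congrArg (Sigma.mk i) (ha2.symm.trans hb2)
  have step : ∀ n : ℕ, ∀ a b : DVert G X, ∀ ha : a ∈ S, ∀ hb : b ∈ S,
      (a.1 : ℕ) ≤ (b.1 : ℕ) → (b.1 : ℕ) - (a.1 : ℕ) = n →
      (SimpleGraph.induce S (derived G X)).Reachable ⟨a, ha⟩ ⟨b, hb⟩ := by
    intro n
    induction n with
    | zero =>
      intro a b ha hb hle h0
      have hab : a = b := huniq a b ha hb (Fin.ext (le_antisymm hle (by omega)))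
      subst hab
      rfl
    | succ n ih =>
      intro a b ha hb hle hn
      have hlt : (a.1 : ℕ) < (b.1 : ℕ) := by omega
      have hj : (a.1 : ℕ) + 1 < d := lt_of_le_of_lt (by omega) b.1.isLt
      set j : Fin d := ⟨(a.1 : ℕ) + 1, hj⟩ with hjdef
      obtain ⟨hua, hua2⟩ := id ha
      obtain ⟨hub, hub2⟩ := id hb
      have huj : u ∈ (X j : Set V) :=
        hinter a.1 j b.1 (by simp [hjdef, Fin.le_def]) (by simp [hjdef, Fin.le_def]; omega)
          u hua hub
      set c : DVert G X := ⟨j, (G.induce (X j : Set V)).connectedComponentMk ⟨u, huj⟩⟩ with hc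
      have hcS : c ∈ S := ⟨huj, rfl⟩
      have hadj : (derived G X).Adj a c :=
        ⟨Or.inl rfl, ⟨u, ⟨hua, hua2⟩, ⟨huj, rfl⟩⟩⟩
      have hc1 : (c.1 : ℕ) = (a.1 : ℕ) + 1 := rfl
      have hadj' : (SimpleGraph.induce S (derived G X)).Adj ⟨a, ha⟩ ⟨c, hcS⟩ := hadj
      exact hadj'.reachable.trans (ih c b hcS hb (by omega) (by omega))
  rw [connected_iff]
  constructor
  · intro x y
    rcases le_total (x.1.1 : ℕ) (y.1.1 : ℕ) with h | h
    · exact step _ x.1 y.1 x.2 y.2 h rfl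
    · exact (step _ y.1 x.1 y.2 x.2 h rfl).symm
  · obtain ⟨i, hi⟩ := hcov u
    have hi' : u ∈ (X i : Set V) := hi
    exact ⟨⟨⟨i, (G.induce (X i : Set V)).connectedComponentMk ⟨u, hi'⟩⟩, ⟨hi', rfl⟩⟩⟩
end

section
/- Let G be a finite simple graph with path decomposition 𝒫 = (X_1,…,X_d), let 𝒢 be the derived graph, and let C ⊆ V(𝒢) have a border partition (B_L, B_R) with B_L ≠ ∅ and r(B_L) < l(B_R) (with the convention l(B_R) = d+1 if B_R = ∅). Set i = r(B_L), A = V_{i−1} ∩ (N_𝒢(δ(C) ∩ V_i) \ C), C′ = C ∪ A, B_L′ = (B_L ∪ A) ∩ δ(C′), and B_R′ = B_R ∩ δ(C′). Then B_L′ and B_R′ are disjoint, δ(C′) = B_L′ ∪ B_R′, and r(B_L′) < l(B_R′) (with the conventions r(B_L′) = 0 if B_L′ = ∅ and l(B_R′) = d+1 if B_R′ = ∅). -/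
open SimpleGraph

/-- After one left-extension step `LE(r(BL))`, the updated pair `(BL', BR')` is again a
partition of the border of the new expansion `C' = C ∪ A`, with `r(BL') < l(BR')`
(under the conventions `r(∅) = 0` and `l(∅) = d + 1`). -/
theorem le_step_border_partition {V : Type*} [Fintype V] (G : SimpleGraph V)
    {d : ℕ} (X : Fin d → Finset V) (hX : IsPathDecomp G X)
    (C BL BR : Set (DVert G X)) (hpart : IsBorderPartition G X C BL BR)
    (hBL : BL.Nonempty) (hsep : rIdx G X BL < lIdx G X BR) :
    ∀ A C' BL' BR' : Set (DVert G X),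
      A = layer G X (rIdx G X BL - 1) ∩
            (nbhd G X (border G X C ∩ layer G X (rIdx G X BL)) \ C) →
      C' = C ∪ A →
      BL' = (BL ∪ A) ∩ border G X C' →
      BR' = BR ∩ border G X C' →
      Disjoint BL' BR' ∧ border G X C' = BL' ∪ BR' ∧ rIdx G X BL' < lIdx G X BR' := by

  obtain ⟨hdisj, hborder, j, hj, hjL, hjR⟩ := hpart
  intro A C' BL' BR' hA hC' hBL' hBR'
  set i := rIdx G X BL with hi
  have hbdd : BddAbove {n | ∃ x ∈ BL, ((x.1 : ℕ)) + 1 = n} := by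
    refine ⟨d, ?_⟩
    rintro n ⟨x, hx, rfl⟩
    exact x.1.isLt
  have hiset : i ∈ {n | ∃ x ∈ BL, ((x.1 : ℕ)) + 1 = n} := by
    apply Nat.sSup_mem
    · obtain ⟨x, hx⟩ := hBL
      exact ⟨(x.1 : ℕ) + 1, x, hx, rfl⟩
    · exact hbdd
  obtain ⟨x0, hx0, hx0i⟩ := hiset
  have hid : i ≤ d := by
    have := x0.1.isLt
    omega
  have hBLle : ∀ x ∈ BL, ((x.1 : ℕ)) + 1 ≤ i := by
    intro x hx
    exact le_csSup hbdd ⟨x, hx, rfl⟩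
  have hBRge : ∀ x ∈ BR, i + 1 ≤ ((x.1 : ℕ)) + 1 := by
    intro x hx
    have h1 : lIdx G X BR ≤ (x.1 : ℕ) + 1 := Nat.sInf_le (Or.inl ⟨x, hx, rfl⟩)
    omega
  have hA1 : ∀ x ∈ A, ((x.1 : ℕ)) + 1 = i - 1 := by
    rw [hA]
    rintro x ⟨hx, -⟩
    exact hx
  have hBL'le : ∀ x ∈ BL', ((x.1 : ℕ)) + 1 ≤ i := by
    intro x hx
    rw [hBL'] at hx
    rcases hx.1 with h | h
    · exact hBLle x h
    · have := hA1 x h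
      omega
  have hBR'ge : ∀ x ∈ BR', i + 1 ≤ ((x.1 : ℕ)) + 1 := by
    intro x hx
    rw [hBR'] at hx
    exact hBRge x hx.1
  refine ⟨?_, ?_, ?_⟩
  · rw [Set.disjoint_left]
    intro x hxL hxR
    have := hBL'le x hxL
    have := hBR'ge x hxR
    omega
  · have hsub : border G X C' ⊆ border G X C ∪ A := by
      rintro x ⟨hxC', y, hadj, hy⟩
      rw [hC'] at hxC' hy
      rcases hxC' with hxC | hxA
      · exact Or.inl ⟨hxC, y, hadj, fun h => hy (Or.inl h)⟩
      · exact Or.inr hxA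
    rw [hBL', hBR']
    ext x
    constructor
    · intro hx
      rcases hsub hx with hb | ha
      · rw [hborder] at hb
        rcases hb with h | h
        · exact Or.inl ⟨Or.inl h, hx⟩
        · exact Or.inr ⟨h, hx⟩
      · exact Or.inl ⟨Or.inr ha, hx⟩
    · rintro (⟨-, hx⟩ | ⟨-, hx⟩) <;> exact hx
  · have hr : rIdx G X BL' ≤ i := by
      apply csSup_le'
      rintro n ⟨x, hx, rfl⟩
      exact hBL'le x hx
    have hl : i + 1 ≤ lIdx G X BR' := by
      apply le_csInf ⟨d + 1, Or.inr rfl⟩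
      rintro n (⟨x, hx, rfl⟩ | rfl)
      · exact hBR'ge x hx
      · omega
    omega
end

section
/- Let G be a finite simple graph with path decomposition 𝒫 = (X_1,…,X_d), let 𝒢 be the derived graph, and let C ⊆ V(𝒢) have a border partition (B_L, B_R) with B_L ≠ ∅. Set i = r(B_L) and suppose i ≥ 2 and that no vertex of V_i ∩ B_L has a neighbor in V_{i+1} \ C (as holds when some left branch branch_L(C,t) with t < i is proper). Set A = V_{i−1} ∩ (N_𝒢(δ(C) ∩ V_i) \ C), C′ = C ∪ A, and B_L′ = (B_L ∪ A) ∩ δ(C′). Then B_L′ ∩ (V_i ∪ V_{i+1} ∪ … ∪ V_d) = ∅; in particular, if B_L′ ≠ ∅ then r(B_L′) < r(B_L). -/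
open SimpleGraph

/-- If `i = r(BL) ≥ 2` and no vertex of `V_i ∩ BL` has a neighbor in `V_{i+1} \ C`, then
after the left-extension step the new left border `BL'` avoids all layers `≥ i`; in
particular, if `BL'` is nonempty then `r(BL') < r(BL)`. -/
theorem le_step_moves_left_border {V : Type*} [Fintype V] (G : SimpleGraph V)
    {d : ℕ} (X : Fin d → Finset V) (hX : IsPathDecomp G X)
    (C BL BR : Set (DVert G X)) (hpart : IsBorderPartition G X C BL BR)
    (hBL : BL.Nonempty) (h2 : 2 ≤ rIdx G X BL)
    (hno : ∀ x ∈ layer G X (rIdx G X BL) ∩ BL,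
      ¬ ∃ u, u ∈ layer G X (rIdx G X BL + 1) ∧ u ∉ C ∧ (derived G X).Adj x u) :
    ∀ A C' BL' : Set (DVert G X),
      A = layer G X (rIdx G X BL - 1) ∩
            (nbhd G X (border G X C ∩ layer G X (rIdx G X BL)) \ C) →
      C' = C ∪ A →
      BL' = (BL ∪ A) ∩ border G X C' →
      BL' ∩ {x : DVert G X | rIdx G X BL ≤ (x.1 : ℕ) + 1} = ∅ ∧
        (BL'.Nonempty → rIdx G X BL' < rIdx G X BL) := by
  obtain ⟨hdisj, hbord, j, hj, hBLle, hBRge⟩ := hpart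
  intro A C' BL' hA hC' hBL'
  set i := rIdx G X BL with hi
  have hbdd : BddAbove {n | ∃ x ∈ BL, (x.1 : ℕ) + 1 = n} := by
    refine ⟨d, ?_⟩
    rintro n ⟨x, -, rfl⟩
    exact x.1.isLt
  have hle : ∀ x ∈ BL, (x.1 : ℕ) + 1 ≤ i := fun x hx => le_csSup hbdd ⟨x, hx, rfl⟩
  have hkey : ∀ x ∈ BL', (x.1 : ℕ) + 1 < i := by
    intro x hx
    rw [hBL'] at hx
    obtain ⟨hmem, hxC', y, hadj, hyC'⟩ := hx
    by_contra hlt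
    push_neg at hlt
    rcases hmem with hBLx | hA'
    · have hxi : (x.1 : ℕ) + 1 = i := le_antisymm (hle x hBLx) hlt
      obtain ⟨hl, -⟩ := id hadj
      have hyC : y ∉ C := fun h => hyC' (by rw [hC']; exact Or.inl h)
      rcases hl with h1 | h1
      · exact hno x ⟨hxi, hBLx⟩
          ⟨y, by simp only [layer, Set.mem_setOf_eq]; omega, hyC, hadj⟩
      · have hyA : y ∈ A := by
          rw [hA]
          refine ⟨by simp only [layer, Set.mem_setOf_eq]; omega,
            ⟨?_, x, ⟨?_, hxi⟩, hadj.symm⟩, hyC⟩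
          · rintro ⟨⟨hyC2, -⟩, -⟩
            exact hyC hyC2
          · rw [hbord]; exact Or.inl hBLx
        exact hyC' (by rw [hC']; exact Or.inr hyA)
    · rw [hA] at hA'
      have : (x.1 : ℕ) + 1 = i - 1 := hA'.1
      omega
  constructor
  · ext x
    simp only [Set.mem_inter_iff, Set.mem_setOf_eq, Set.mem_empty_iff_false, iff_false,
      not_and]
    intro hx
    exact not_le.mpr (hkey x hx)
  · intro hne
    have h1 : rIdx G X BL' ≤ i - 1 := by
      apply csSup_le
      · obtain ⟨x, hx⟩ := hne
        exact ⟨(x.1 : ℕ) + 1, x, hx, rfl⟩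
      · rintro n ⟨x, hx, rfl⟩
        have := hkey x hx
        omega
    omega
end
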